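/- arXiv:2008.00761 — 5 statements merged into one kernel-verified Lean document; each statement's English description precedes it below -/
import Mathlib

section
/- For α ∈ (1/2, 1) and s ≥ 1, the function ρ_α(s) = (s+1)^{2α} + (s-1)^{2α} - 2 s^{2α} is strictly positive. -/
theorem stmt_1 (α s : ℝ) (hα : 1/2 < α ∧ α < 1) (hs : 1 ≤ s) :
    0 < (s + 1) ^ (2*α) + (s - 1) ^ (2*α) - 2 * s ^ (2*α) := by
  have hp : (1:ℝ) < 2*α := by linarith [hα.1]
  have hc := strictConvexOn_rpow hp
  have h := hc.2 (show s - 1 ∈ Set.Ici (0:ℝ) by simp; linarith)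
    (show s + 1 ∈ Set.Ici (0:ℝ) by simp; linarith)
    (show s - 1 ≠ s + 1 by intro he; linarith)
    (show (0:ℝ) < 1/2 by norm_num) (show (0:ℝ) < 1/2 by norm_num)
    (show (1:ℝ)/2 + 1/2 = 1 by norm_num)
  simp only [smul_eq_mul] at h
  have he : (1/2) * (s - 1) + (1/2) * (s + 1) = s := by ring
  rw [he] at h
  linarith
end

section
/- For α ∈ (0,1) and r > 1, ∫_{-r}^{r} ρ_α(v) (1 - |v|/r) dv = (1/(r(2α+1)(α+1))) ((r+1)^{2α+2} + (r-1)^{2α+2} - 2 r^{2α+2} - 2), where ρ_α(v) = |v+1|^{2α} + |v-1|^{2α} - 2|v|^{2α}. -/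
open Real

lemma hda_add (c p : ℝ) (hp : 1 ≤ p) (x : ℝ) :
    HasDerivAt (fun v : ℝ => (v + c) ^ p) (p * (x + c) ^ (p - 1)) x := by
  have h := Real.hasDerivAt_rpow_const (x := x + c) (p := p) (Or.inr hp)
  have h2 : HasDerivAt (fun v : ℝ => v + c) 1 x := (hasDerivAt_id x).add_const c
  simpa [Function.comp_def] using h.comp x h2

lemma hda_sub (c p : ℝ) (hp : 1 ≤ p) (x : ℝ) :
    HasDerivAt (fun v : ℝ => (c - v) ^ p) (-(p * (c - x) ^ (p - 1))) x := by
  have h := Real.hasDerivAt_rpow_const (x := c - x) (p := p) (Or.inr hp)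
  have h2 : HasDerivAt (fun v : ℝ => c - v) (-1) x := by
    simpa using (hasDerivAt_id x).const_sub c
  simpa [Function.comp_def] using h.comp x h2

lemma rpow_succ' (t b : ℝ) (ht : 0 ≤ t) (hb : 0 < b) : t ^ (b + 1) = t ^ b * t := by
  rcases eq_or_lt_of_le ht with h | h
  · rw [← h, Real.zero_rpow (by positivity), Real.zero_rpow (ne_of_gt hb), mul_zero]
  · rw [Real.rpow_add h, Real.rpow_one]

noncomputable def Fone (b r v : ℝ) : ℝ :=
  (1 + 1/r) * (v + 1) ^ (b + 1) / (b + 1) - (v + 1) ^ (b + 2) / (r * (b + 2))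
  - (1 - 1/r) * (1 - v) ^ (b + 1) / (b + 1) - (1 - v) ^ (b + 2) / (r * (b + 2))
  - 2 * ((v + 0) ^ (b + 1) / (b + 1) - (v + 0) ^ (b + 2) / (r * (b + 2)))

noncomputable def Ftwo (b r v : ℝ) : ℝ :=
  (1 + 1/r) * (v + 1) ^ (b + 1) / (b + 1) - (v + 1) ^ (b + 2) / (r * (b + 2))
  + (1 - 1/r) * (v + (-1)) ^ (b + 1) / (b + 1) - (v + (-1)) ^ (b + 2) / (r * (b + 2))
  - 2 * ((v + 0) ^ (b + 1) / (b + 1) - (v + 0) ^ (b + 2) / (r * (b + 2)))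

lemma Fone_deriv (b r x : ℝ) (hb : 0 < b) (hr : 1 < r) (hx : x ∈ Set.Icc (0:ℝ) 1) :
    HasDerivAt (Fone b r)
      ((|x + 1| ^ b + |x - 1| ^ b - 2 * |x| ^ b) * (1 - |x| / r)) x := by
  obtain ⟨hx0, hx1⟩ := hx
  have hb1 : (1:ℝ) ≤ b + 1 := by linarith
  have hb2 : (1:ℝ) ≤ b + 2 := by linarith
  have h1 := ((hda_add 1 (b+1) hb1 x).div_const (b+1)).const_mul (1 + 1/r)
  have h2 := (hda_add 1 (b+2) hb2 x).div_const (r * (b+2))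
  have h3 := ((hda_sub 1 (b+1) hb1 x).div_const (b+1)).const_mul (1 - 1/r)
  have h4 := (hda_sub 1 (b+2) hb2 x).div_const (r * (b+2))
  have h5 := (((hda_add 0 (b+1) hb1 x).div_const (b+1)).sub
      ((hda_add 0 (b+2) hb2 x).div_const (r * (b+2)))).const_mul 2
  have H := ((((h1.sub h2).sub h3).sub h4).sub h5)
  have e1 : b + 1 - 1 = b := by ring
  have e2 : b + 2 - 1 = b + 1 := by ring
  rw [e1, e2] at H
  convert H using 1
  · ext v; simp only [Fone]
  · rfl
  · ext v; simp only [Fone, Pi.sub_apply, Pi.add_apply]; ring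
  have ha1 : |x + 1| = x + 1 := abs_of_nonneg (by linarith)
  have ha2 : |x - 1| = 1 - x := by rw [abs_sub_comm]; exact abs_of_nonneg (by linarith)
  have ha3 : |x| = x := abs_of_nonneg hx0
  simp only [add_zero]
  rw [ha1, ha2, ha3,
    rpow_succ' (x+1) b (by linarith) hb, rpow_succ' (1-x) b (by linarith) hb,
    rpow_succ' x b hx0 hb]
  have hbn : b + 1 ≠ 0 := by linarith
  have hbn2 : b + 2 ≠ 0 := by linarith
  have hrn : r ≠ 0 := by linarith
  field_simp
  ring

lemma Ftwo_deriv (b r x : ℝ) (hb : 0 < b) (hr : 1 < r) (hx : x ∈ Set.Icc (1:ℝ) r) :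
    HasDerivAt (Ftwo b r)
      ((|x + 1| ^ b + |x - 1| ^ b - 2 * |x| ^ b) * (1 - |x| / r)) x := by
  obtain ⟨hx0, hx1⟩ := hx
  have hb1 : (1:ℝ) ≤ b + 1 := by linarith
  have hb2 : (1:ℝ) ≤ b + 2 := by linarith
  have h1 := ((hda_add 1 (b+1) hb1 x).div_const (b+1)).const_mul (1 + 1/r)
  have h2 := (hda_add 1 (b+2) hb2 x).div_const (r * (b+2))
  have h3 := ((hda_add (-1) (b+1) hb1 x).div_const (b+1)).const_mul (1 - 1/r)
  have h4 := (hda_add (-1) (b+2) hb2 x).div_const (r * (b+2))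
  have h5 := (((hda_add 0 (b+1) hb1 x).div_const (b+1)).sub
      ((hda_add 0 (b+2) hb2 x).div_const (r * (b+2)))).const_mul 2
  have H := ((((h1.sub h2).add h3).sub h4).sub h5)
  have e1 : b + 1 - 1 = b := by ring
  have e2 : b + 2 - 1 = b + 1 := by ring
  rw [e1, e2] at H
  convert H using 1
  · ext v; simp only [Ftwo]
  · rfl
  · ext v; simp only [Ftwo, Pi.sub_apply, Pi.add_apply]; ring
  have ha1 : |x + 1| = x + 1 := abs_of_nonneg (by linarith)
  have ha2 : |x - 1| = x - 1 := abs_of_nonneg (by linarith)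
  have ha3 : |x| = x := abs_of_nonneg (by linarith)
  have hxm : x + (-1) = x - 1 := by ring
  simp only [add_zero]
  rw [ha1, ha2, ha3, hxm,
    rpow_succ' (x+1) b (by linarith) hb, rpow_succ' (x-1) b (by linarith) hb,
    rpow_succ' x b (by linarith) hb]
  have hbn : b + 1 ≠ 0 := by linarith
  have hbn2 : b + 2 ≠ 0 := by linarith
  have hrn : r ≠ 0 := by linarith
  field_simp
  ring

lemma main_calc (b r : ℝ) (hb : 0 < b) (hr : 1 < r) :
    (∫ v in (-r)..r, (|v + 1| ^ b + |v - 1| ^ b - 2 * |v| ^ b) * (1 - |v| / r)) =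
      2 / (r * (b + 1) * (b + 2)) *
        ((r + 1) ^ (b + 2) + (r - 1) ^ (b + 2) - 2 * r ^ (b + 2) - 2) := by
  set f : ℝ → ℝ := fun v => (|v + 1| ^ b + |v - 1| ^ b - 2 * |v| ^ b) * (1 - |v| / r)
    with hf
  have hcont : Continuous f := by
    apply Continuous.mul
    · apply Continuous.sub
      · exact ((continuous_abs.comp (continuous_id.add continuous_const)).rpow_const
          (fun x => Or.inr hb.le)).add
          ((continuous_abs.comp (continuous_id.sub continuous_const)).rpow_const
          (fun x => Or.inr hb.le))
      · exact continuous_const.mul (continuous_abs.rpow_const (fun x => Or.inr hb.le))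
    · exact continuous_const.sub (continuous_abs.div_const r)
  have hii : ∀ a c : ℝ, IntervalIntegrable f MeasureTheory.volume a c :=
    fun a c => hcont.intervalIntegrable a c
  have feven : ∀ x : ℝ, f (-x) = f x := by
    intro x
    have e1 : -x + 1 = -(x - 1) := by ring
    have e2 : -x - 1 = -(x + 1) := by ring
    simp only [hf, e1, e2, abs_neg]
    ring
  have sym : (∫ v in (-r)..(0:ℝ), f v) = ∫ v in (0:ℝ)..r, f v := by
    have h := intervalIntegral.integral_comp_neg (a := (0:ℝ)) (b := r) (f := f)
    rw [neg_zero] at h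
    rw [← h]
    apply intervalIntegral.integral_congr
    intro x _
    exact feven x
  have split : (∫ v in (-r)..r, f v) = (∫ v in (-r)..(0:ℝ), f v) + ∫ v in (0:ℝ)..r, f v :=
    (intervalIntegral.integral_add_adjacent_intervals (hii _ _) (hii _ _)).symm
  have split2 : (∫ v in (0:ℝ)..r, f v) = (∫ v in (0:ℝ)..1, f v) + ∫ v in (1:ℝ)..r, f v :=
    (intervalIntegral.integral_add_adjacent_intervals (hii _ _) (hii _ _)).symm
  have i1 : (∫ v in (0:ℝ)..1, f v) = Fone b r 1 - Fone b r 0 := by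
    apply intervalIntegral.integral_eq_sub_of_hasDerivAt
    · intro x hx
      rw [Set.uIcc_of_le (by norm_num : (0:ℝ) ≤ 1)] at hx
      exact Fone_deriv b r x hb hr hx
    · exact hii 0 1
  have i2 : (∫ v in (1:ℝ)..r, f v) = Ftwo b r r - Ftwo b r 1 := by
    apply intervalIntegral.integral_eq_sub_of_hasDerivAt (f := Ftwo b r)
    · intro x hx
      rw [Set.uIcc_of_le hr.le] at hx
      exact Ftwo_deriv b r x hb hr hx
    · exact hii 1 r
  rw [split, sym, split2, i1, i2]
  have hbn : b + 1 ≠ 0 := by linarith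
  have hbn2 : b + 2 ≠ 0 := by linarith
  have hrn : r ≠ 0 := by linarith
  have z1 : (0:ℝ) ^ (b + 1) = 0 := Real.zero_rpow hbn
  have z2 : (0:ℝ) ^ (b + 2) = 0 := Real.zero_rpow hbn2
  have q1 : ∀ t : ℝ, 0 ≤ t → t ^ (b + 2) = t ^ (b + 1) * t := by
    intro t ht
    have h := rpow_succ' t (b + 1) ht (by linarith)
    rwa [show b + 1 + 1 = b + 2 by ring] at h
  simp only [Fone, Ftwo]
  norm_num
  rw [show r + -1 = r - 1 by ring] -- may be unnecessary
  rw [q1 (r + 1) (by linarith), q1 (r - 1) (by linarith), q1 r (by linarith),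
    q1 2 (by norm_num), z1, z2]
  field_simp
  ring

theorem stmt_5 (α r : ℝ) (hα : 0 < α ∧ α < 1) (hr : 1 < r) :
    (∫ v in (-r)..r,
        (|v + 1| ^ (2*α) + |v - 1| ^ (2*α) - 2 * |v| ^ (2*α)) * (1 - |v| / r)) =
      (1 / (r * (2*α + 1) * (α + 1))) *
        ((r + 1) ^ (2*α + 2) + (r - 1) ^ (2*α + 2) - 2 * r ^ (2*α + 2) - 2) := by
  rw [main_calc (2*α) r (by linarith [hα.1]) hr]
  have h1 : r ≠ 0 := by linarith
  have h2 : 2*α + 1 ≠ 0 := by linarith [hα.1]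
  have h3 : 2*α + 2 ≠ 0 := by linarith [hα.1]
  have h4 : α + 1 ≠ 0 := by linarith [hα.1]
  field_simp
end

section
/- For α ∈ (0,1), as r → ∞, ∫_{-r}^{r} ρ_α(v)(1 - |v|/r) dv is asymptotically equivalent to 2 r^{2α-1} whenever α > 1/2; i.e. the ratio of the integral to 2 r^{2α-1} tends to 1. -/
open Filter Set intervalIntegral

private lemma rpow_succ'_s6 {x : ℝ} (hx : 0 ≤ x) {y : ℝ} (hy : 0 < y) :
    x ^ (y + 1) = x ^ y * x := by
  rcases hx.eq_or_lt with h | h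
  · rw [← h, Real.zero_rpow (by positivity), Real.zero_rpow hy.ne', zero_mul]
  · exact Real.rpow_add_one h.ne' y

/-- antiderivative on [0,1] -/
private lemma hd1 {b r : ℝ} (hb : 1 < b) (hr : r ≠ 0) {v : ℝ} (h0 : 0 ≤ v) (h1 : v ≤ 1) :
    HasDerivAt (fun v : ℝ =>
      ((v+1) ^ (b+1) - (1-v) ^ (b+1) - 2 * v ^ (b+1)) / (b+1)
      - ((v+1) ^ (b+2) / (b+2) - (v+1) ^ (b+1) / (b+1)
         - (1-v) ^ (b+1) / (b+1) + (1-v) ^ (b+2) / (b+2)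
         - 2 * (v ^ (b+2) / (b+2))) / r)
      (((v+1) ^ b + (1-v) ^ b - 2 * v ^ b) * (1 - v / r)) v := by
  have hb0 : (0:ℝ) < b := by linarith
  have hb1 : (1:ℝ) ≤ b + 1 := by linarith
  have hb2 : (1:ℝ) ≤ b + 2 := by linarith
  have d1 : HasDerivAt (fun v : ℝ => v + 1) 1 v := (hasDerivAt_id v).add_const 1
  have d2 : HasDerivAt (fun v : ℝ => 1 - v) (-1) v := (hasDerivAt_id v).const_sub 1
  have d3 : HasDerivAt (fun v : ℝ => v) 1 v := hasDerivAt_id v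
  have A1 := d1.rpow_const (Or.inr hb1)
  have A2 := d2.rpow_const (Or.inr hb1)
  have A3 := d3.rpow_const (Or.inr hb1)
  have B1 := d1.rpow_const (Or.inr hb2)
  have B2 := d2.rpow_const (Or.inr hb2)
  have B3 := d3.rpow_const (Or.inr hb2)
  have G := ((A1.sub A2).sub (A3.const_mul 2)).div_const (b+1)
  have H := (((((B1.div_const (b+2)).sub (A1.div_const (b+1))).sub
      (A2.div_const (b+1))).add (B2.div_const (b+2))).sub
      ((B3.div_const (b+2)).const_mul 2))
  have F := G.sub (H.div_const r)
  refine F.congr_deriv ?_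
  rw [show b+1-1 = b by ring, show b+2-1 = b+1 by ring]
  have e1 : (v+1) ^ (b+1) = (v+1) ^ b * (v+1) := rpow_succ'_s6 (by linarith) hb0
  have e2 : (1-v) ^ (b+1) = (1-v) ^ b * (1-v) := rpow_succ'_s6 (by linarith) hb0
  have e3 : v ^ (b+1) = v ^ b * v := rpow_succ'_s6 h0 hb0
  rw [e1, e2, e3]
  have hb1' : b + 1 ≠ 0 := by linarith
  have hb2' : b + 2 ≠ 0 := by linarith
  field_simp
  ring

/-- antiderivative on [1,r] -/
private lemma hd2 {b r : ℝ} (hb : 1 < b) (hr : r ≠ 0) {v : ℝ} (h1 : 1 ≤ v) :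
    HasDerivAt (fun v : ℝ =>
      ((v+1) ^ (b+1) + (v-1) ^ (b+1) - 2 * v ^ (b+1)) / (b+1)
      - ((v+1) ^ (b+2) / (b+2) - (v+1) ^ (b+1) / (b+1)
         + (v-1) ^ (b+2) / (b+2) + (v-1) ^ (b+1) / (b+1)
         - 2 * (v ^ (b+2) / (b+2))) / r)
      (((v+1) ^ b + (v-1) ^ b - 2 * v ^ b) * (1 - v / r)) v := by
  have hb0 : (0:ℝ) < b := by linarith
  have hb1 : (1:ℝ) ≤ b + 1 := by linarith
  have hb2 : (1:ℝ) ≤ b + 2 := by linarith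
  have d1 : HasDerivAt (fun v : ℝ => v + 1) 1 v := (hasDerivAt_id v).add_const 1
  have d2 : HasDerivAt (fun v : ℝ => v - 1) 1 v := (hasDerivAt_id v).sub_const 1
  have d3 : HasDerivAt (fun v : ℝ => v) 1 v := hasDerivAt_id v
  have A1 := d1.rpow_const (Or.inr hb1)
  have A2 := d2.rpow_const (Or.inr hb1)
  have A3 := d3.rpow_const (Or.inr hb1)
  have B1 := d1.rpow_const (Or.inr hb2)
  have B2 := d2.rpow_const (Or.inr hb2)
  have B3 := d3.rpow_const (Or.inr hb2)
  have G := ((A1.add A2).sub (A3.const_mul 2)).div_const (b+1)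
  have H := (((((B1.div_const (b+2)).sub (A1.div_const (b+1))).add
      (B2.div_const (b+2))).add (A2.div_const (b+1))).sub
      ((B3.div_const (b+2)).const_mul 2))
  have F := G.sub (H.div_const r)
  refine F.congr_deriv ?_
  rw [show b+1-1 = b by ring, show b+2-1 = b+1 by ring]
  have e1 : (v+1) ^ (b+1) = (v+1) ^ b * (v+1) := rpow_succ'_s6 (by linarith) hb0
  have e2 : (v-1) ^ (b+1) = (v-1) ^ b * (v-1) := rpow_succ'_s6 (by linarith) hb0
  have e3 : v ^ (b+1) = v ^ b * v := rpow_succ'_s6 (by linarith) hb0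
  rw [e1, e2, e3]
  have hb1' : b + 1 ≠ 0 := by linarith
  have hb2' : b + 2 ≠ 0 := by linarith
  field_simp
  ring

private lemma key {α : ℝ} (ha1 : 1/2 < α) (ha2 : α < 1) {r : ℝ} (hr : 1 < r) :
    (∫ v in (-r)..r, (|v + 1| ^ (2*α) + |v - 1| ^ (2*α) - 2 * |v| ^ (2*α)) * (1 - |v| / r))
    = ((r+1) ^ (2*α+2) + (r-1) ^ (2*α+2) - 2 * r ^ (2*α+2) - 2) / (r*(2*α+1)*(α+1)) := by
  have hb : 1 < 2*α := by linarith
  have hb0 : (0:ℝ) ≤ 2*α := by linarith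
  have hr0 : (0:ℝ) < r := by linarith
  set f : ℝ → ℝ := fun v => (|v + 1| ^ (2*α) + |v - 1| ^ (2*α) - 2 * |v| ^ (2*α)) * (1 - |v| / r) with hf
  have hcont : Continuous f := by
    apply Continuous.mul
    · exact (((continuous_abs.comp (continuous_id.add continuous_const)).rpow_const
        (fun x => Or.inr hb0)).add ((continuous_abs.comp (continuous_id.sub
        continuous_const)).rpow_const (fun x => Or.inr hb0))).sub
        (continuous_const.mul (continuous_abs.rpow_const (fun x => Or.inr hb0)))
    · exact continuous_const.sub (continuous_abs.div_const r)
  have hfe : ∀ x, f (-x) = f x := by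
    intro x
    simp only [hf]
    rw [show -x+1 = -(x-1) by ring, show -x-1 = -(x+1) by ring, abs_neg, abs_neg, abs_neg]
    ring
  have heven : (∫ v in (-r)..(0:ℝ), f v) = ∫ v in (0:ℝ)..r, f v := by
    have h := intervalIntegral.integral_comp_neg (a := (0:ℝ)) (b := r) f
    simp only [neg_zero] at h
    rw [← h]
    exact intervalIntegral.integral_congr (fun x _ => hfe x)
  have hsplit : (∫ v in (-r)..r, f v) = 2 * ∫ v in (0:ℝ)..r, f v := by
    rw [← intervalIntegral.integral_add_adjacent_intervals
      (hcont.intervalIntegrable (-r) 0) (hcont.intervalIntegrable 0 r), heven]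
    ring
  have hsplit2 : (∫ v in (0:ℝ)..r, f v) = (∫ v in (0:ℝ)..1, f v) + ∫ v in (1:ℝ)..r, f v :=
    (intervalIntegral.integral_add_adjacent_intervals
      (hcont.intervalIntegrable 0 1) (hcont.intervalIntegrable 1 r)).symm
  -- first piece
  have hcong1 : (∫ v in (0:ℝ)..1, f v)
      = ∫ v in (0:ℝ)..1, ((v+1) ^ (2*α) + (1-v) ^ (2*α) - 2 * v ^ (2*α)) * (1 - v / r) := by
    apply intervalIntegral.integral_congr
    intro v hv
    rw [uIcc_of_le (by norm_num : (0:ℝ) ≤ 1)] at hv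
    obtain ⟨h0, h1⟩ := hv
    simp only [hf]
    rw [abs_of_nonneg (by linarith : (0:ℝ) ≤ v + 1),
      abs_of_nonpos (by linarith : v - 1 ≤ 0), abs_of_nonneg h0]
    ring_nf
  have hcong2 : (∫ v in (1:ℝ)..r, f v)
      = ∫ v in (1:ℝ)..r, ((v+1) ^ (2*α) + (v-1) ^ (2*α) - 2 * v ^ (2*α)) * (1 - v / r) := by
    apply intervalIntegral.integral_congr
    intro v hv
    rw [uIcc_of_le hr.le] at hv
    obtain ⟨h1, h2⟩ := hv
    simp only [hf]
    rw [abs_of_nonneg (by linarith : (0:ℝ) ≤ v + 1),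
      abs_of_nonneg (by linarith : (0:ℝ) ≤ v - 1), abs_of_nonneg (by linarith : (0:ℝ) ≤ v)]
  have hcg : Continuous (fun v : ℝ =>
      ((v+1) ^ (2*α) + (1-v) ^ (2*α) - 2 * v ^ (2*α)) * (1 - v / r)) := by
    apply Continuous.mul
    · exact (((continuous_id.add continuous_const).rpow_const (fun x => Or.inr hb0)).add
        ((continuous_const.sub continuous_id).rpow_const (fun x => Or.inr hb0))).sub
        (continuous_const.mul (continuous_id.rpow_const (fun x => Or.inr hb0)))
    · exact continuous_const.sub (continuous_id.div_const r)
  have hcg2 : Continuous (fun v : ℝ =>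
      ((v+1) ^ (2*α) + (v-1) ^ (2*α) - 2 * v ^ (2*α)) * (1 - v / r)) := by
    apply Continuous.mul
    · exact (((continuous_id.add continuous_const).rpow_const (fun x => Or.inr hb0)).add
        ((continuous_id.sub continuous_const).rpow_const (fun x => Or.inr hb0))).sub
        (continuous_const.mul (continuous_id.rpow_const (fun x => Or.inr hb0)))
    · exact continuous_const.sub (continuous_id.div_const r)
  set F1 : ℝ → ℝ := fun v =>
      ((v+1) ^ (2*α+1) - (1-v) ^ (2*α+1) - 2 * v ^ (2*α+1)) / (2*α+1)
      - ((v+1) ^ (2*α+2) / (2*α+2) - (v+1) ^ (2*α+1) / (2*α+1)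
         - (1-v) ^ (2*α+1) / (2*α+1) + (1-v) ^ (2*α+2) / (2*α+2)
         - 2 * (v ^ (2*α+2) / (2*α+2))) / r with hF1
  set F2 : ℝ → ℝ := fun v =>
      ((v+1) ^ (2*α+1) + (v-1) ^ (2*α+1) - 2 * v ^ (2*α+1)) / (2*α+1)
      - ((v+1) ^ (2*α+2) / (2*α+2) - (v+1) ^ (2*α+1) / (2*α+1)
         + (v-1) ^ (2*α+2) / (2*α+2) + (v-1) ^ (2*α+1) / (2*α+1)
         - 2 * (v ^ (2*α+2) / (2*α+2))) / r with hF2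
  have hint1 : (∫ v in (0:ℝ)..1, ((v+1) ^ (2*α) + (1-v) ^ (2*α) - 2 * v ^ (2*α)) * (1 - v / r))
      = F1 1 - F1 0 := by
    apply intervalIntegral.integral_eq_sub_of_hasDerivAt
    · intro x hx
      rw [uIcc_of_le (by norm_num : (0:ℝ) ≤ 1)] at hx
      exact hd1 hb hr0.ne' hx.1 hx.2
    · exact hcg.intervalIntegrable 0 1
  have hint2 : (∫ v in (1:ℝ)..r, ((v+1) ^ (2*α) + (v-1) ^ (2*α) - 2 * v ^ (2*α)) * (1 - v / r))
      = F2 r - F2 1 := by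
    apply intervalIntegral.integral_eq_sub_of_hasDerivAt
    · intro x hx
      rw [uIcc_of_le hr.le] at hx
      exact hd2 hb hr0.ne' hx.1
    · exact hcg2.intervalIntegrable 1 r
  rw [hsplit, hsplit2, hcong1, hcong2, hint1, hint2]
  simp only [hF1, hF2]
  norm_num
  have z1 : (0:ℝ) ^ (2*α+1) = 0 := Real.zero_rpow (by linarith)
  have z2 : (0:ℝ) ^ (2*α+2) = 0 := Real.zero_rpow (by linarith)
  have o1 : (1:ℝ) ^ (2*α+1) = 1 := Real.one_rpow _
  have o2 : (1:ℝ) ^ (2*α+2) = 1 := Real.one_rpow _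
  have s1 : (2:ℝ) ^ (2*α+2) = 2 ^ (2*α+1) * 2 := by
    rw [show 2*α+2 = (2*α+1)+1 by ring]; exact rpow_succ'_s6 (by norm_num) (by linarith)
  have s2 : (r+1) ^ (2*α+2) = (r+1) ^ (2*α+1) * (r+1) := by
    rw [show 2*α+2 = (2*α+1)+1 by ring]; exact rpow_succ'_s6 (by linarith) (by linarith)
  have s3 : (r-1) ^ (2*α+2) = (r-1) ^ (2*α+1) * (r-1) := by
    rw [show 2*α+2 = (2*α+1)+1 by ring]; exact rpow_succ'_s6 (by linarith) (by linarith)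
  have s4 : r ^ (2*α+2) = r ^ (2*α+1) * r := by
    rw [show 2*α+2 = (2*α+1)+1 by ring]; exact rpow_succ'_s6 (by linarith) (by linarith)
  simp only [z1, z2, o1, o2, s1, s2, s3, s4]
  have h1 : (2*α+1) ≠ 0 := by linarith
  have h2 : (2*α+2) ≠ 0 := by linarith
  have h3 : (α+1) ≠ 0 := by linarith
  field_simp
  ring

private lemma lim_aux {p : ℝ} (hp : 2 ≤ p) :
    Tendsto (fun x : ℝ => ((1+x)^p + (1-x)^p - 2)/x^2) (nhdsWithin 0 (Ioi 0))
      (nhds (p*(p-1))) := by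
  have h1p : (1:ℝ) ≤ p := by linarith
  have h1p' : (1:ℝ) ≤ p - 1 := by linarith
  have h0p : (0:ℝ) ≤ p := by linarith
  set h : ℝ → ℝ := fun x => p*(1+x)^(p-1) - p*(1-x)^(p-1) with hh
  have hder : ∀ x : ℝ, HasDerivAt (fun x : ℝ => (1+x)^p + (1-x)^p - 2) (h x) x := by
    intro x
    have d1 : HasDerivAt (fun x : ℝ => 1+x) 1 x := (hasDerivAt_id x).const_add 1
    have d2 : HasDerivAt (fun x : ℝ => 1-x) (-1) x := (hasDerivAt_id x).const_sub 1
    have := ((d1.rpow_const (Or.inr h1p)).add (d2.rpow_const (Or.inr h1p))).sub_const 2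
    refine this.congr_deriv ?_
    simp only [hh]
    ring
  have hder2 : HasDerivAt h (2*(p*(p-1))) 0 := by
    have d1 : HasDerivAt (fun x : ℝ => 1+x) 1 (0:ℝ) := (hasDerivAt_id 0).const_add 1
    have d2 : HasDerivAt (fun x : ℝ => 1-x) (-1) (0:ℝ) := (hasDerivAt_id 0).const_sub 1
    have := ((d1.rpow_const (Or.inr h1p')).const_mul p).sub
      ((d2.rpow_const (Or.inr h1p')).const_mul p)
    refine this.congr_deriv ?_
    norm_num
    ring
  have hslope : Tendsto (slope h 0) (nhdsWithin 0 (Ioi 0)) (nhds (2*(p*(p-1)))) :=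
    (hasDerivAt_iff_tendsto_slope.mp hder2).mono_left
      (nhdsWithin_mono 0 (fun x hx => ne_of_gt hx))
  have h00 : h 0 = 0 := by norm_num [hh]
  have hdiv : Tendsto (fun x : ℝ => h x / (2*x)) (nhdsWithin 0 (Ioi 0)) (nhds (p*(p-1))) := by
    have := hslope.div_const 2
    rw [show 2*(p*(p-1))/2 = p*(p-1) by ring] at this
    apply Tendsto.congr' _ this
    filter_upwards [self_mem_nhdsWithin] with x hx
    rw [mem_Ioi] at hx
    rw [slope_def_field, h00, sub_zero, sub_zero, div_div, mul_comm x 2]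
  apply HasDerivAt.lhopital_zero_nhdsGT
    (f' := h) (g' := fun x : ℝ => 2*x)
  · filter_upwards with x using hder x
  · filter_upwards with x
    have := hasDerivAt_pow 2 x
    norm_num at this
    exact this
  · filter_upwards [self_mem_nhdsWithin] with x hx
    rw [mem_Ioi] at hx
    positivity
  · have hc : Continuous (fun x : ℝ => (1+x)^p + (1-x)^p - 2) := by
      exact (((continuous_const.add continuous_id).rpow_const (fun x => Or.inr h0p)).add
        ((continuous_const.sub continuous_id).rpow_const (fun x => Or.inr h0p))).sub
        continuous_const
    have ht : Tendsto (fun x : ℝ => (1+x)^p + (1-x)^p - 2) (nhdsWithin 0 (Ioi 0))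
        (nhds ((1+0)^p + (1-0)^p - 2)) := (hc.tendsto 0).mono_left nhdsWithin_le_nhds
    norm_num at ht
    exact ht
  · have ht : Tendsto (fun x : ℝ => x^2) (nhdsWithin 0 (Ioi 0)) (nhds ((0:ℝ)^2)) :=
      ((continuous_pow 2).tendsto (0:ℝ)).mono_left nhdsWithin_le_nhds
    norm_num at ht
    exact ht
  · exact hdiv

theorem stmt_6 (α : ℝ) (hα : 1/2 < α ∧ α < 1) :
    Tendsto (fun r : ℝ =>
        (∫ v in (-r)..r,
          (|v + 1| ^ (2*α) + |v - 1| ^ (2*α) - 2 * |v| ^ (2*α)) * (1 - |v| / r)) /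
        (2 * r ^ (2*α - 1)))
      atTop (nhds 1) := by
  obtain ⟨ha1, ha2⟩ := hα
  have hb : 1 < 2*α := by linarith
  have hp : (2:ℝ) ≤ 2*α+2 := by linarith
  have T1 : Tendsto (fun r : ℝ =>
      ((1+r⁻¹)^(2*α+2) + (1-r⁻¹)^(2*α+2) - 2)/(r⁻¹)^2) atTop
      (nhds ((2*α+2)*((2*α+2)-1))) := by
    exact (lim_aux hp).comp tendsto_inv_atTop_nhdsGT_zero
  have T2 : Tendsto (fun r : ℝ => 2 * r^(-(2*α))) atTop (nhds 0) := by
    simpa using (tendsto_rpow_neg_atTop (by linarith : (0:ℝ) < 2*α)).const_mul 2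
  have T3 := (T1.sub T2).div_const ((2*α+1)*(2*α+2))
  have hval : (((2*α+2)*((2*α+2)-1)) - 0)/((2*α+1)*(2*α+2)) = 1 := by
    have h1 : (2*α+1) ≠ 0 := by linarith
    have h2 : (2*α+2) ≠ 0 := by linarith
    field_simp
    ring
  rw [hval] at T3
  apply T3.congr'
  filter_upwards [eventually_gt_atTop 1] with r hr
  rw [key ha1 ha2 hr]
  have hr0 : (0:ℝ) < r := by linarith
  have h1r : (0:ℝ) ≤ 1 - r⁻¹ := by
    have : r⁻¹ ≤ 1 := by
      rw [inv_le_one_iff₀]; right; linarith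
    linarith
  have e1 : (r+1)^(2*α+2) = r^(2*α+2) * (1+r⁻¹)^(2*α+2) := by
    rw [← Real.mul_rpow hr0.le (by positivity)]
    congr 1
    field_simp
  have e2 : (r-1)^(2*α+2) = r^(2*α+2) * (1-r⁻¹)^(2*α+2) := by
    rw [← Real.mul_rpow hr0.le h1r]
    congr 1
    field_simp
  have e3 : r^(2*α+2) = r^(2*α-1) * r * r * r := by
    rw [show 2*α+2 = ((2*α-1)+1)+1+1 by ring,
      rpow_succ'_s6 hr0.le (by linarith), rpow_succ'_s6 hr0.le (by linarith),
      rpow_succ'_s6 hr0.le (by linarith)]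
  have e4 : r^(-(2*α)) = (r^(2*α-1) * r)⁻¹ := by
    have e : r ^ ((2*α-1)+1) = r^(2*α-1)*r := rpow_succ'_s6 hr0.le (by linarith)
    rw [show (2*α-1)+1 = 2*α by ring] at e
    rw [Real.rpow_neg hr0.le, e]
  rw [e1, e2, e3, e4]
  have hA : (0:ℝ) < r^(2*α-1) := Real.rpow_pos_of_pos hr0 _
  have h1 : (2*α+1) ≠ 0 := by linarith
  have h2 : (2*α+2) ≠ 0 := by linarith
  have h3 : (α+1) ≠ 0 := by linarith
  field_simp
end

section
/- Let η ∈ (0,1) and C : [0,∞) → ℝ be measurable, bounded, with C(t) · t^η → 1 as t → ∞. Then, as n → ∞, ∫_0^{2n} (2n - t) C(t) dt is asymptotically equivalent to 2^{2-η} B(2, 1-η) n^{2-η}, where B denotes the Beta function. -/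
open Filter MeasureTheory intervalIntegral

lemma aux_int14 {η : ℝ} (hη0 : 0 < η) (hη1 : η < 1) {a : ℝ} (ha : 0 < a) :
    ∫ t in (0:ℝ)..a, (a - t) * t ^ (-η) = a ^ (2-η) / ((1-η)*(2-η)) := by
  have h1 : (-1:ℝ) < -η := by linarith
  have h2 : (-1:ℝ) < 1-η := by linarith
  have hcong : Set.EqOn (fun t : ℝ => (a - t) * t ^ (-η))
      (fun t : ℝ => a * t ^ (-η) - t ^ (1-η)) (Set.uIcc 0 a) := by
    intro t ht
    rw [Set.uIcc_of_le ha.le] at ht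
    rcases eq_or_lt_of_le ht.1 with h | h
    · simp [← h, Real.zero_rpow (by linarith : -η ≠ 0),
        Real.zero_rpow (by linarith : 1-η ≠ 0)]
    · have he : t ^ (1-η) = t * t ^ (-η) := by
        rw [show (1:ℝ)-η = 1 + (-η) by ring, Real.rpow_add h, Real.rpow_one]
      simp only [he]; ring
  rw [intervalIntegral.integral_congr hcong,
    intervalIntegral.integral_sub
      ((intervalIntegral.intervalIntegrable_rpow' h1).const_mul a)
      (intervalIntegral.intervalIntegrable_rpow' h2),
    intervalIntegral.integral_const_mul, integral_rpow (Or.inl h1), integral_rpow (Or.inl h2)]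
  rw [Real.zero_rpow (by linarith : -η+1 ≠ 0), Real.zero_rpow (by linarith : 1-η+1 ≠ 0),
    sub_zero, sub_zero, show (1:ℝ)-η+1 = 2-η by ring]
  have hm : a ^ ((2:ℝ)-η) = a * a ^ (-η+1) := by
    rw [show (2:ℝ)-η = 1 + (-η+1) by ring, Real.rpow_add ha, Real.rpow_one]
  have h3 : (1:ℝ)-η ≠ 0 := by linarith
  have h4 : (2:ℝ)-η ≠ 0 := by linarith
  rw [show -η+1 = 1-η by ring] at hm ⊢
  field_simp
  linear_combination (η-2) * hm

lemma aux_B14 {η : ℝ} (hη0 : 0 < η) (hη1 : η < 1) :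
    ∫ s in (0:ℝ)..1, s * (1 - s) ^ (-η) = 1 / ((1-η)*(2-η)) := by
  have h := intervalIntegral.integral_comp_sub_left (a := 0) (b := 1)
    (fun u : ℝ => (1 - u) * u ^ (-η)) 1
  simp only [sub_sub_cancel, sub_zero, sub_self] at h
  rw [h, aux_int14 hη0 hη1 one_pos, Real.one_rpow]

theorem stmt_14 (η : ℝ) (hη : 0 < η ∧ η < 1) (C : ℝ → ℝ) (hCmeas : Measurable C)
    (M : ℝ) (hCbdd : ∀ t, |C t| ≤ M)
    (hC : Tendsto (fun t : ℝ => C t * t ^ η) atTop (nhds 1)) :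
    Tendsto (fun n : ℝ =>
        (∫ t in (0:ℝ)..(2*n), (2*n - t) * C t) /
          (2 ^ (2 - η) * (∫ s in (0:ℝ)..1, s * (1 - s) ^ (-η)) * n ^ (2 - η)))
      atTop (nhds 1) := by
  obtain ⟨hη0, hη1⟩ := hη
  have hM0 : 0 ≤ M := le_trans (abs_nonneg _) (hCbdd 0)
  have h3 : (0:ℝ) < 1 - η := by linarith
  have h4 : (0:ℝ) < 2 - η := by linarith
  simp only [aux_B14 hη0 hη1]
  set B : ℝ := 1 / ((1-η)*(2-η)) with hBdef
  have hBpos : 0 < B := by rw [hBdef]; positivity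
  -- integrability helpers
  have hIpow : ∀ a b : ℝ, IntervalIntegrable (fun t : ℝ => t^(-η)) volume a b :=
    fun a b => intervalIntegral.intervalIntegrable_rpow' (by linarith)
  have hIC : ∀ a b : ℝ, IntervalIntegrable C volume a b := by
    intro a b
    rw [intervalIntegrable_iff]
    apply MeasureTheory.Measure.integrableOn_of_bounded (M := M) measure_Ioc_lt_top.ne
      hCmeas.aestronglyMeasurable
    exact .of_forall fun t => by simpa [Real.norm_eq_abs] using hCbdd t
  have hIdiff : ∀ a b : ℝ, IntervalIntegrable (fun t : ℝ => C t - t^(-η)) volume a b :=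
    fun a b => (hIC a b).sub (hIpow a b)
  have hImul : ∀ (c a b : ℝ) (g : ℝ → ℝ), IntervalIntegrable g volume a b →
      IntervalIntegrable (fun t => (c - t) * g t) volume a b :=
    fun c a b g hg => hg.continuousOn_mul ((continuous_const.sub continuous_id).continuousOn)
  rw [Metric.tendsto_nhds]
  intro ε hε
  set ε₁ := ε / 4 with hε₁def
  have hε₁ : 0 < ε₁ := by positivity
  obtain ⟨T₀, hT₀⟩ := (Metric.tendsto_atTop.mp hC) ε₁ hε₁
  set T := max T₀ 1 with hTdef
  have hT1 : (1:ℝ) ≤ T := le_max_right _ _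
  have hTpos : (0:ℝ) < T := lt_of_lt_of_le one_pos hT1
  set K := M * T + T^(1-η)/(1-η) with hKdef
  have hK0 : 0 ≤ K := by
    have h5 := Real.rpow_nonneg hTpos.le (1-η)
    have h6 : 0 ≤ T^(1-η)/(1-η) := div_nonneg h5 h3.le
    have h7 : 0 ≤ M * T := mul_nonneg hM0 hTpos.le
    rw [hKdef]; linarith
  have htend : Tendsto (fun n : ℝ => (2*n)^(1-η)) atTop atTop :=
    (tendsto_rpow_atTop h3).comp (tendsto_id.const_mul_atTop two_pos)
  filter_upwards [htend.eventually_ge_atTop (K / (ε₁ * B)), eventually_ge_atTop (max T 1)]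
    with n hn2 hn1
  have hnT : T ≤ n := le_trans (le_max_left _ _) hn1
  have hn1' : (1:ℝ) ≤ n := le_trans (le_max_right _ _) hn1
  set a := 2*n with hadef
  have ha : 0 < a := by rw [hadef]; linarith
  have hTa : T ≤ a := by rw [hadef]; linarith
  have hpow : a^((2:ℝ)-η) = a * a^(1-η) := by
    rw [show (2:ℝ)-η = 1+(1-η) by ring, Real.rpow_add ha, Real.rpow_one]
  have hapow_pos : (0:ℝ) < a^((1:ℝ)-η) := Real.rpow_pos_of_pos ha _
  have hapow2_pos : (0:ℝ) < a^((2:ℝ)-η) := Real.rpow_pos_of_pos ha _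
  have hD : 2^((2:ℝ)-η) * B * n^((2:ℝ)-η) = B * a^((2:ℝ)-η) := by
    rw [hadef, Real.mul_rpow (by norm_num) (by linarith)]; ring
  -- exact value of the power integral
  have e2 : ∫ t in (0:ℝ)..a, (a - t) * t^(-η) = a^((2:ℝ)-η) * B := by
    rw [aux_int14 hη0 hη1 ha, hBdef]; ring
  -- split the numerator
  have e1 : ∫ t in (0:ℝ)..a, (a - t) * C t
      = (∫ t in (0:ℝ)..a, (a - t) * (C t - t^(-η))) + a^((2:ℝ)-η) * B := by
    rw [← e2, ← intervalIntegral.integral_add (hImul a 0 a _ (hIdiff 0 a))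
      (hImul a 0 a _ (hIpow 0 a))]
    apply intervalIntegral.integral_congr
    intro t _
    ring
  have hsplitG : ∫ t in (0:ℝ)..a, (a - t) * (C t - t^(-η))
      = (∫ t in (0:ℝ)..T, (a - t) * (C t - t^(-η)))
        + ∫ t in T..a, (a - t) * (C t - t^(-η)) :=
    (intervalIntegral.integral_add_adjacent_intervals
      (hImul a 0 T _ (hIdiff 0 T)) (hImul a T a _ (hIdiff T a))).symm
  -- bound on [0, T]
  have hb1 : |∫ t in (0:ℝ)..T, (a - t) * (C t - t^(-η))| ≤ a * K := by
    refine le_trans (intervalIntegral.abs_integral_le_integral_abs hTpos.le) ?_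
    have hmono : ∫ t in (0:ℝ)..T, |(a - t) * (C t - t^(-η))|
        ≤ ∫ t in (0:ℝ)..T, a * (M + t^(-η)) := by
      apply intervalIntegral.integral_mono_on hTpos.le
        ((hImul a 0 T _ (hIdiff 0 T)).abs)
        (((_root_.intervalIntegrable_const).add (hIpow 0 T)).const_mul a)
      intro t ht
      rw [abs_mul]
      have hp : (0:ℝ) ≤ t^(-η) := Real.rpow_nonneg ht.1 _
      have h1 : |a - t| ≤ a := by
        rw [abs_of_nonneg (by linarith [ht.2] : (0:ℝ) ≤ a - t)]; linarith [ht.1]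
      have h2 : |C t - t^(-η)| ≤ M + t^(-η) :=
        le_trans (abs_sub _ _) (by rw [abs_of_nonneg hp]; linarith [hCbdd t])
      exact mul_le_mul h1 h2 (abs_nonneg _) ha.le
    refine le_trans hmono (le_of_eq ?_)
    rw [intervalIntegral.integral_const_mul,
      intervalIntegral.integral_add _root_.intervalIntegrable_const (hIpow 0 T),
      intervalIntegral.integral_const, integral_rpow (Or.inl (by linarith : (-1:ℝ) < -η)),
      Real.zero_rpow (by linarith : -η+1 ≠ 0), hKdef,
      show -η+1 = 1-η by ring]
    simp only [smul_eq_mul, sub_zero]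
    ring
  -- bound on [T, a]
  have hb2 : |∫ t in T..a, (a - t) * (C t - t^(-η))| ≤ ε₁ * (a^((2:ℝ)-η) * B) := by
    refine le_trans (intervalIntegral.abs_integral_le_integral_abs hTa) ?_
    have step1 : ∫ t in T..a, |(a - t) * (C t - t^(-η))|
        ≤ ∫ t in T..a, ε₁ * ((a - t) * t^(-η)) := by
      apply intervalIntegral.integral_mono_on hTa
        ((hImul a T a _ (hIdiff T a)).abs)
        ((hImul a T a _ (hIpow T a)).const_mul ε₁)
      intro t ht
      have htpos : (0:ℝ) < t := lt_of_lt_of_le (lt_of_lt_of_le one_pos hT1) ht.1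
      have hp : (0:ℝ) ≤ t^(-η) := Real.rpow_nonneg htpos.le _
      have hat : (0:ℝ) ≤ a - t := by linarith [ht.2]
      have hpow1 : t^η * t^(-η) = 1 := by
        rw [← Real.rpow_add htpos, add_neg_cancel, Real.rpow_zero]
      have key : C t - t^(-η) = (C t * t^η - 1) * t^(-η) := by
        calc C t - t^(-η) = C t * (t^η * t^(-η)) - t^(-η) := by rw [hpow1]; ring
          _ = (C t * t^η - 1) * t^(-η) := by ring
      have hd : |C t * t^η - 1| ≤ ε₁ := by
        have := hT₀ t (le_trans (le_max_left _ _) ht.1)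
        rw [Real.dist_eq] at this
        linarith
      rw [abs_mul, key, abs_mul, abs_of_nonneg hp, abs_of_nonneg hat]
      calc (a-t) * (|C t * t^η - 1| * t^(-η)) ≤ (a-t) * (ε₁ * t^(-η)) := by
            apply mul_le_mul_of_nonneg_left _ hat
            exact mul_le_mul_of_nonneg_right hd hp
        _ = ε₁ * ((a - t) * t^(-η)) := by ring
    refine le_trans step1 ?_
    rw [intervalIntegral.integral_const_mul]
    apply mul_le_mul_of_nonneg_left _ hε₁.le
    rw [← e2]
    apply intervalIntegral.integral_mono_interval hTpos.le hTa le_rfl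
    · refine Filter.eventually_of_mem (self_mem_ae_restrict measurableSet_Ioc) ?_
      intro t ht
      have : (0:ℝ) ≤ t^(-η) := Real.rpow_nonneg ht.1.le _
      have : (0:ℝ) ≤ a - t := by linarith [ht.2]
      positivity
    · exact hImul a 0 a _ (hIpow 0 a)
  -- assemble
  have hKa : K ≤ ε₁ * B * a^((1:ℝ)-η) := by
    rw [div_le_iff₀ (by positivity)] at hn2
    calc K ≤ (2*n)^((1:ℝ)-η) * (ε₁ * B) := hn2
      _ = ε₁ * B * a^((1:ℝ)-η) := by rw [hadef]; ring
  set G1 := ∫ t in (0:ℝ)..T, (a - t) * (C t - t^(-η)) with hG1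
  set G2 := ∫ t in T..a, (a - t) * (C t - t^(-η)) with hG2
  have hDpos : (0:ℝ) < B * a^((2:ℝ)-η) := by positivity
  rw [Real.dist_eq, hD, e1, hsplitG]
  have heq : (G1 + G2 + a^((2:ℝ)-η) * B) / (B * a^((2:ℝ)-η)) - 1
      = (G1 + G2) / (B * a^((2:ℝ)-η)) := by
    field_simp
    ring
  rw [heq, abs_div, abs_of_pos hDpos]
  rw [div_lt_iff₀ hDpos]
  have habs : |G1 + G2| ≤ a * K + ε₁ * (a^((2:ℝ)-η) * B) :=
    le_trans (abs_add_le _ _) (add_le_add hb1 hb2)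
  have haK : a * K ≤ ε₁ * (B * a^((2:ℝ)-η)) := by
    calc a * K ≤ a * (ε₁ * B * a^((1:ℝ)-η)) := mul_le_mul_of_nonneg_left hKa ha.le
      _ = ε₁ * (B * a^((2:ℝ)-η)) := by rw [hpow]; ring
  have : ε₁ * (B * a^((2:ℝ)-η)) + ε₁ * (a^((2:ℝ)-η) * B) < ε * (B * a^((2:ℝ)-η)) := by
    have h5 : ε₁ * (B * a^((2:ℝ)-η)) + ε₁ * (a^((2:ℝ)-η) * B)
        = (ε/2) * (B * a^((2:ℝ)-η)) := by rw [hε₁def]; ring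
    rw [h5]
    apply mul_lt_mul_of_pos_right _ hDpos
    linarith
  linarith [habs, haK]
end

section
/- Let f : ℝ → ℝ satisfy f(x) < u for all x < 0 and f(x) ≥ u for all x > u* for some u* > 0. Then for every σ ≥ σ₀ > 0, the coefficient a₁(σ) = ∫_ℝ 1{f(σ x) ≥ u} x φ(x) dx satisfies a₁(σ) ≥ φ(u*/σ₀) > 0, where φ is the standard normal density. -/
open MeasureTheory Real Set

theorem stmt_18 (f : ℝ → ℝ) (hf : Measurable f) (u ustar σ σ₀ : ℝ)
    (h1 : ∀ x < 0, f x < u) (hustar : 0 < ustar) (h2 : ∀ x > ustar, u ≤ f x)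
    (hσ₀ : 0 < σ₀) (hσ : σ₀ ≤ σ) :
    (∫ x : ℝ, (if u ≤ f (σ * x) then (1:ℝ) else 0) * x *
        ((Real.sqrt (2 * Real.pi))⁻¹ * Real.exp (- x ^ 2 / 2))) ≥
      (Real.sqrt (2 * Real.pi))⁻¹ * Real.exp (- (ustar / σ₀) ^ 2 / 2) ∧
    0 < (Real.sqrt (2 * Real.pi))⁻¹ * Real.exp (- (ustar / σ₀) ^ 2 / 2) := by
  have hσpos : 0 < σ := lt_of_lt_of_le hσ₀ hσ
  set c : ℝ := (Real.sqrt (2 * Real.pi))⁻¹ with hc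
  have hcpos : 0 < c := by
    rw [hc]
    positivity
  set a : ℝ := ustar / σ with ha
  have hapos : 0 < a := div_pos hustar hσpos
  set h : ℝ → ℝ := fun x => (if u ≤ f (σ * x) then (1:ℝ) else 0) * x *
      (c * Real.exp (- x ^ 2 / 2)) with hh
  set k : ℝ → ℝ := fun x => (Ioi a).indicator (fun x => x * (c * Real.exp (- x ^ 2 / 2))) x
    with hk
  -- pointwise bound k ≤ h
  have hkh : ∀ x, k x ≤ h x := by
    intro x
    by_cases hx : x ∈ Ioi a
    · have hxu : σ * x > ustar := by
        have : a < x := hx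
        calc ustar = σ * a := by rw [ha]; field_simp
        _ < σ * x := by exact (mul_lt_mul_iff_right₀ hσpos).2 this
      simp only [hk, hh, indicator_of_mem hx, if_pos (h2 _ hxu), one_mul]
      exact le_rfl
    · rw [hk]
      simp only [indicator_of_notMem hx]
      rcases le_or_gt 0 x with h0 | h0
      · have : 0 ≤ h x := by
          rw [hh]
          have : (0:ℝ) ≤ (if u ≤ f (σ * x) then (1:ℝ) else 0) := by positivity
          positivity
        linarith
      · have : f (σ * x) < u := h1 _ (by nlinarith)
        simp [hh, not_le.2 this]
  -- integrability
  have hgauss : Integrable (fun x : ℝ => |x| * Real.exp (-(1/2) * x ^ 2)) := by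
    have := (integrable_mul_exp_neg_mul_sq (by norm_num : (0:ℝ) < 1/2)).abs
    apply this.congr
    filter_upwards with x
    rw [abs_mul, abs_of_pos (Real.exp_pos _)]
  have hInt : Integrable h := by
    apply Integrable.mono' (hgauss.const_mul c)
    · apply Measurable.aestronglyMeasurable
      apply Measurable.mul
      · apply Measurable.mul
        · exact Measurable.ite (measurableSet_le measurable_const (hf.comp (measurable_const_mul σ))) measurable_const measurable_const
        · exact measurable_id
      · exact (measurable_id.pow_const 2).neg.div_const 2 |>.exp.const_mul c
    · filter_upwards with x
      rw [hh]
      simp only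
      have hi : |(if u ≤ f (σ * x) then (1:ℝ) else 0)| ≤ 1 := by
        split <;> simp
      have he : Real.exp (- x ^ 2 / 2) = Real.exp (-(1/2) * x ^ 2) := by ring_nf
      rw [Real.norm_eq_abs, abs_mul, abs_mul, abs_of_pos (mul_pos hcpos (Real.exp_pos _)), he]
      calc |(if u ≤ f (σ * x) then (1:ℝ) else 0)| * |x| * (c * Real.exp (-(1/2) * x ^ 2))
          ≤ 1 * |x| * (c * Real.exp (-(1/2) * x ^ 2)) := by
            apply mul_le_mul_of_nonneg_right (mul_le_mul_of_nonneg_right hi (abs_nonneg _))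
            positivity
        _ = c * (|x| * Real.exp (-(1/2) * x ^ 2)) := by ring
  have hbase : Integrable (fun x : ℝ => x * (c * Real.exp (- x ^ 2 / 2))) := by
    have h0 : Integrable (fun x : ℝ => x * Real.exp (-(1/2) * x ^ 2)) :=
      integrable_mul_exp_neg_mul_sq (by norm_num)
    apply (h0.mul_const c).congr
    filter_upwards with x
    ring_nf
  have hIntk : Integrable k := hbase.indicator measurableSet_Ioi
  -- compute ∫ k
  have hkval : ∫ x, k x = c * Real.exp (- a ^ 2 / 2) := by
    rw [hk, integral_indicator measurableSet_Ioi]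
    have hderiv : ∀ x ∈ Ioi a, HasDerivAt (fun y : ℝ => -(c * Real.exp (- y ^ 2 / 2)))
        (x * (c * Real.exp (- x ^ 2 / 2))) x := by
      intro x _
      have : HasDerivAt (fun y : ℝ => - y ^ 2 / 2) (-x) x := by
        have := ((hasDerivAt_pow 2 x).neg).div_const 2
        convert this using 1
        · rfl
        · rfl
        · rfl
        · push_cast; ring
      have := ((this.exp).const_mul c).neg
      convert this using 1
      · rfl
      · rfl
      · rfl
      · ring
    have hcont : ContinuousWithinAt (fun y : ℝ => -(c * Real.exp (- y ^ 2 / 2))) (Ici a) a := by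
      apply Continuous.continuousWithinAt
      continuity
    have htend : Filter.Tendsto (fun y : ℝ => -(c * Real.exp (- y ^ 2 / 2))) Filter.atTop (nhds 0) := by
      rw [← neg_zero]
      apply Filter.Tendsto.neg
      rw [show (0:ℝ) = c * 0 by ring]
      apply Filter.Tendsto.const_mul
      apply Real.tendsto_exp_atBot.comp
      have hsq : Filter.Tendsto (fun y : ℝ => -y ^ 2) Filter.atTop Filter.atBot :=
        Filter.tendsto_neg_atTop_atBot.comp (Filter.tendsto_pow_atTop (by norm_num : 2 ≠ 0))
      exact hsq.atBot_div_const (by norm_num : (0:ℝ) < 2)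
    rw [integral_Ioi_of_hasDerivAt_of_tendsto hcont hderiv hbase.integrableOn htend]
    ring
  constructor
  · calc (∫ x, h x) ≥ ∫ x, k x := integral_mono hIntk hInt hkh
      _ = c * Real.exp (- a ^ 2 / 2) := hkval
      _ ≥ c * Real.exp (- (ustar / σ₀) ^ 2 / 2) := by
          apply mul_le_mul_of_nonneg_left _ hcpos.le
          apply Real.exp_le_exp.2
          have haa : a ≤ ustar / σ₀ := by
            rw [ha]
            exact div_le_div_of_nonneg_left hustar.le hσ₀ hσ
          nlinarith
      _ = c * Real.exp (- (ustar / σ₀) ^ 2 / 2) := rfl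
  · positivity
end
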